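/- Let ℋ be a complex separable Hilbert space and ϱ a nonzero positive trace-class operator on ℋ with spectral decomposition ϱ = Σ_j p^j |e_j⟩⟨e_j| (p^j > 0). Then a bounded operator a ∈ B(ℋ) satisfies Tr(ϱ(a† b + b a)) = 0 for all b ∈ B(ℋ) if and only if: ⟨f_l| a |e_k⟩ = 0 for all basis vectors f_l of ker ϱ and e_k of (ker ϱ)^⊥, and ⟨e_k| a |e_l⟩ = −(p_k/p_l) · conj(⟨e_l| a |e_k⟩) for all k, l. -/

import Mathlib

open scoped InnerProductSpace ComplexOrder

set_option maxHeartbeats 1000000 in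
/-- Characterization of the Lie algebra of the isotropy group of a nonzero positive trace-class
operator `ϱ = Σ_j p_j |e_j⟩⟨e_j|` on a complex separable Hilbert space: a bounded operator `a`
satisfies `Tr(ϱ(a† b + b a)) = 0` for all `b` iff `⟨f_l|a|e_k⟩ = 0` for all basis vectors `f_l`
of `ker ϱ`, `e_k` of its orthocomplement, and `⟨e_k|a|e_l⟩ = −(p_k/p_l) conj(⟨e_l|a|e_k⟩)`. -/
theorem stmt14 {H : Type*} [NormedAddCommGroup H] [InnerProductSpace ℂ H] [CompleteSpace H]
    [TopologicalSpace.SeparableSpace H]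
    {ι κ : Type*} [Countable ι] [Countable κ]
    (e : ι → H) (f : κ → H)
    (honb : Orthonormal ℂ (Sum.elim e f))
    (htotal : (Submodule.span ℂ (Set.range (Sum.elim e f))).topologicalClosure = ⊤)
    (p : ι → ℝ) (hp : ∀ j, 0 < p j) (hsum : Summable p)
    (ϱ : H →L[ℂ] H) (hϱe : ∀ j, ϱ (e j) = (p j : ℂ) • e j) (hϱf : ∀ k, ϱ (f k) = 0)
    (hϱ0 : ϱ ≠ 0)
    (a : H →L[ℂ] H) :
    (∀ b : H →L[ℂ] H,
        ∑' j : ι, (p j : ℂ) * ⟪e j, (star a * b + b * a) (e j)⟫_ℂ = 0) ↔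
      (∀ (k : κ) (j : ι), ⟪f k, a (e j)⟫_ℂ = 0) ∧
        ∀ j l : ι, ⟪e j, a (e l)⟫_ℂ = -((p j : ℂ) / (p l : ℂ)) * star ⟪e l, a (e j)⟫_ℂ := by
  classical
  have horth := orthonormal_iff_ite.mp honb
  have hee : ∀ j l : ι, ⟪e j, e l⟫_ℂ = if j = l then 1 else 0 := by
    intro j l; simpa using horth (Sum.inl j) (Sum.inl l)
  have hef : ∀ (j : ι) (k : κ), ⟪e j, f k⟫_ℂ = 0 := by
    intro j k; simpa using horth (Sum.inl j) (Sum.inr k)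
  have hpne : ∀ j, (p j : ℂ) ≠ 0 := fun j =>
    Complex.ofReal_ne_zero.mpr (hp j).ne'
  have hstar : ∀ (A : H →L[ℂ] H) (x y : H), ⟪x, (star A) y⟫_ℂ = ⟪A x, y⟫_ℂ := by
    intro A x y
    rw [ContinuousLinearMap.star_eq_adjoint, ContinuousLinearMap.adjoint_inner_right]
  have hstar' : ∀ (A : H →L[ℂ] H) (x y : H), ⟪(star A) x, y⟫_ℂ = ⟪x, A y⟫_ℂ := by
    intro A x y
    rw [ContinuousLinearMap.star_eq_adjoint, ContinuousLinearMap.adjoint_inner_left]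
  constructor
  · intro h
    constructor
    · -- test with b = |f k⟩⟨e j|
      intro k j
      have hb := h ((innerSL ℂ (e j)).smulRight (f k))
      have hterm : ∀ m : ι,
          (p m : ℂ) * ⟪e m, (star a * ((innerSL ℂ (e j)).smulRight (f k))
              + ((innerSL ℂ (e j)).smulRight (f k)) * a) (e m)⟫_ℂ
          = if m = j then (p j : ℂ) * ⟪a (e j), f k⟫_ℂ else 0 := by
        intro m
        rw [ContinuousLinearMap.add_apply, ContinuousLinearMap.mul_apply,
          ContinuousLinearMap.mul_apply, inner_add_right, hstar]
        simp only [ContinuousLinearMap.smulRight_apply, innerSL_apply_apply, inner_smul_right]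
        rw [hee j m, hef m k]
        by_cases hmj : m = j
        · subst hmj; simp
        · simp [hmj, Ne.symm hmj]
      rw [tsum_congr hterm, tsum_ite_eq] at hb
      have hz : ⟪a (e j), f k⟫_ℂ = 0 := by
        rcases mul_eq_zero.mp hb with h' | h'
        · exact absurd h' (hpne j)
        · exact h'
      rw [← inner_conj_symm, hz, map_zero]
    · -- test with b = |e l⟩⟨e j|
      intro j l
      have hb := h ((innerSL ℂ (e j)).smulRight (e l))
      have hterm : ∀ m : ι,
          (p m : ℂ) * ⟪e m, (star a * ((innerSL ℂ (e j)).smulRight (e l))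
              + ((innerSL ℂ (e j)).smulRight (e l)) * a) (e m)⟫_ℂ
          = (if m = j then (p j : ℂ) * ⟪a (e j), e l⟫_ℂ else 0)
            + (if m = l then (p l : ℂ) * ⟪e j, a (e l)⟫_ℂ else 0) := by
        intro m
        rw [ContinuousLinearMap.add_apply, ContinuousLinearMap.mul_apply,
          ContinuousLinearMap.mul_apply, inner_add_right, hstar]
        simp only [ContinuousLinearMap.smulRight_apply, innerSL_apply_apply, inner_smul_right]
        rw [hee j m, hee m l]
        by_cases hmj : m = j <;> by_cases hml : m = l
        · subst hmj; subst hml; simp; ring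
        · subst hmj; simp [hml]
        · subst hml; simp [hmj, Ne.symm hmj]
        · simp [hmj, Ne.symm hmj, hml]
      have hs : HasSum (fun m : ι =>
            (if m = j then (p j : ℂ) * ⟪a (e j), e l⟫_ℂ else 0)
            + (if m = l then (p l : ℂ) * ⟪e j, a (e l)⟫_ℂ else 0))
          ((p j : ℂ) * ⟪a (e j), e l⟫_ℂ + (p l : ℂ) * ⟪e j, a (e l)⟫_ℂ) :=
        (hasSum_ite_eq j _).add (hasSum_ite_eq l _)
      have hk : (p j : ℂ) * ⟪a (e j), e l⟫_ℂ + (p l : ℂ) * ⟪e j, a (e l)⟫_ℂ = 0 := by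
        rw [← hs.tsum_eq, ← tsum_congr hterm]
        exact hb
      have hconj : ⟪a (e j), e l⟫_ℂ = star ⟪e l, a (e j)⟫_ℂ := by
        rw [← inner_conj_symm (e l) (a (e j)), starRingEnd_apply, star_star]
      rw [hconj] at hk
      rw [neg_mul, div_mul_eq_mul_div, ← neg_div, eq_div_iff (hpne l)]
      linear_combination hk
  · rintro ⟨h1, h2⟩ b
    have he : Orthonormal ℂ e := by
      have := honb.comp Sum.inl Sum.inl_injective
      simpa using this
    have h2' : ∀ j l : ι, (p j : ℂ) * star ⟪e l, a (e j)⟫_ℂ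
        = -((p l : ℂ) * ⟪e j, a (e l)⟫_ℂ) := by
      intro j l
      have hh := congrArg star (h2 l j)
      rw [star_mul', star_neg, star_div₀, star_star] at hh
      rw [Complex.star_def, Complex.conj_ofReal, Complex.conj_ofReal, ← Complex.star_def] at hh
      rw [hh]
      field_simp [hpne j]
    -- the Hilbert basis
    set B : HilbertBasis (ι ⊕ κ) ℂ H := HilbertBasis.mk honb htotal.ge with hBdef
    have hB : ⇑B = Sum.elim e f := by rw [hBdef]; exact HilbertBasis.coe_mk _ _
    have hz : ∀ (j : ι) (k : κ), ⟪a (e j), f k⟫_ℂ = 0 := fun j k => by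
      rw [← inner_conj_symm, h1 k j, map_zero]
    -- the double-indexed family
    set F : ι × ι → ℂ :=
      fun q => (p q.1 : ℂ) * ⟪e q.1, b (e q.2)⟫_ℂ * ⟪e q.2, a (e q.1)⟫_ℂ with hFdef
    have hbes : ∀ x : H, Summable fun l : ι => ‖⟪e l, x⟫_ℂ‖ ^ 2 :=
      fun x => Orthonormal.inner_products_summable x he
    have hbes' : ∀ x : H, (∑' l : ι, ‖⟪e l, x⟫_ℂ‖ ^ 2) ≤ ‖x‖ ^ 2 :=
      fun x => Orthonormal.tsum_inner_products_le x he
    -- summability of F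
    have hC : ∀ j l : ι, ‖F (j, l)‖ ≤ p j *
        ((‖⟪e l, (star b) (e j)⟫_ℂ‖ ^ 2 + ‖⟪e l, a (e j)⟫_ℂ‖ ^ 2) / 2) := by
      intro j l
      have hnb : ‖⟪e j, b (e l)⟫_ℂ‖ = ‖⟪e l, (star b) (e j)⟫_ℂ‖ := by
        rw [← hstar' b (e j) (e l), norm_inner_symm]
      have hnorm : ‖F (j, l)‖ = p j * (‖⟪e j, b (e l)⟫_ℂ‖ * ‖⟪e l, a (e j)⟫_ℂ‖) := by
        simp only [hFdef, norm_mul, Complex.norm_real, Real.norm_eq_abs,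
          abs_of_pos (hp j), mul_assoc]
      rw [hnorm, hnb]
      have h2ab := two_mul_le_add_sq ‖⟪e l, (star b) (e j)⟫_ℂ‖ ‖⟪e l, a (e j)⟫_ℂ‖
      have : ‖⟪e l, (star b) (e j)⟫_ℂ‖ * ‖⟪e l, a (e j)⟫_ℂ‖
          ≤ (‖⟪e l, (star b) (e j)⟫_ℂ‖ ^ 2 + ‖⟪e l, a (e j)⟫_ℂ‖ ^ 2) / 2 := by linarith
      exact mul_le_mul_of_nonneg_left this (hp j).le
    have hFabs : Summable fun q : ι × ι => ‖F q‖ := by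
      rw [summable_prod_of_nonneg (fun q => norm_nonneg _)]
      constructor
      · intro j
        apply Summable.of_nonneg_of_le (fun l => norm_nonneg _) (fun l => hC j l)
        exact Summable.mul_left (p j)
          (((hbes _).add (hbes _)).div_const 2)
      · apply Summable.of_nonneg_of_le
          (fun j => tsum_nonneg fun l => norm_nonneg _)
          (f := fun j => p j * ((‖star b‖ ^ 2 + ‖a‖ ^ 2) / 2))
          ?_ (hsum.mul_right _)
        intro j
        have hrow : Summable fun l => p j *
            ((‖⟪e l, (star b) (e j)⟫_ℂ‖ ^ 2 + ‖⟪e l, a (e j)⟫_ℂ‖ ^ 2) / 2) :=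
          Summable.mul_left (p j)
            (((hbes _).add (hbes _)).div_const 2)
        have hrow0 : Summable fun l => ‖F (j, l)‖ :=
          Summable.of_nonneg_of_le (fun l => norm_nonneg _) (fun l => hC j l) hrow
        have step1 : ∑' l, ‖F (j, l)‖ ≤ ∑' l, p j *
            ((‖⟪e l, (star b) (e j)⟫_ℂ‖ ^ 2 + ‖⟪e l, a (e j)⟫_ℂ‖ ^ 2) / 2) :=
          Summable.tsum_le_tsum (fun l => hC j l) hrow0 hrow
        have hop : ∀ (A : H →L[ℂ] H), ‖A (e j)‖ ≤ ‖A‖ := fun A => by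
          have := A.le_opNorm (e j)
          rwa [he.1 j, mul_one] at this
        have step2 : ∑' l, p j *
            ((‖⟪e l, (star b) (e j)⟫_ℂ‖ ^ 2 + ‖⟪e l, a (e j)⟫_ℂ‖ ^ 2) / 2)
            ≤ p j * ((‖star b‖ ^ 2 + ‖a‖ ^ 2) / 2) := by
          rw [tsum_mul_left, tsum_div_const,
            Summable.tsum_add (hbes _) (hbes _)]
          have b1 : (∑' l, ‖⟪e l, (star b) (e j)⟫_ℂ‖ ^ 2) ≤ ‖star b‖ ^ 2 :=
            le_trans (hbes' _)
              (pow_le_pow_left₀ (norm_nonneg _) (hop (star b)) 2)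
          have b2 : (∑' l, ‖⟪e l, a (e j)⟫_ℂ‖ ^ 2) ≤ ‖a‖ ^ 2 :=
            le_trans (hbes' _)
              (pow_le_pow_left₀ (norm_nonneg _) (hop a) 2)
          have hle : (∑' l, ‖⟪e l, (star b) (e j)⟫_ℂ‖ ^ 2) + ∑' l, ‖⟪e l, a (e j)⟫_ℂ‖ ^ 2
              ≤ ‖star b‖ ^ 2 + ‖a‖ ^ 2 := add_le_add b1 b2
          exact mul_le_mul_of_nonneg_left (by linarith) (hp j).le
        exact step1.trans step2
    have hFsum : Summable F := hFabs.of_norm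
    have hFswap : Summable (fun q : ι × ι => F q.swap) :=
      (Equiv.prodComm ι ι).summable_iff.mpr hFsum
    -- termwise identity
    have key : ∀ j : ι, (p j : ℂ) * ⟪e j, (star a * b + b * a) (e j)⟫_ℂ
        = ∑' l : ι, (F (j, l) - F (l, j)) := by
      intro j
      have e1 : ∑' l : ι, ⟪a (e j), e l⟫_ℂ * ⟪e l, b (e j)⟫_ℂ = ⟪a (e j), b (e j)⟫_ℂ := by
        rw [← B.tsum_inner_mul_inner (a (e j)) (b (e j))]
        have hsupp : Function.support (fun i => ⟪a (e j), B i⟫_ℂ * ⟪B i, b (e j)⟫_ℂ)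
            ⊆ Set.range Sum.inl := by
          intro i hi
          rcases i with l | k
          · exact ⟨l, rfl⟩
          · exfalso; apply hi
            rw [hB]; simp only [Sum.elim_inr]; rw [hz j k, zero_mul]
        have := Function.Injective.tsum_eq Sum.inl_injective hsupp
        rw [← this]
        exact tsum_congr fun l => by rw [hB]; simp
      have e2 : ∑' l : ι, ⟪e j, b (e l)⟫_ℂ * ⟪e l, a (e j)⟫_ℂ = ⟪e j, b (a (e j))⟫_ℂ := by
        rw [← hstar' b (e j) (a (e j)),
          ← B.tsum_inner_mul_inner ((star b) (e j)) (a (e j))]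
        have hsupp : Function.support (fun i => ⟪(star b) (e j), B i⟫_ℂ * ⟪B i, a (e j)⟫_ℂ)
            ⊆ Set.range Sum.inl := by
          intro i hi
          rcases i with l | k
          · exact ⟨l, rfl⟩
          · exfalso; apply hi
            rw [hB]; simp only [Sum.elim_inr]; rw [h1 k j, mul_zero]
        have := Function.Injective.tsum_eq Sum.inl_injective hsupp
        rw [← this]
        exact tsum_congr fun l => by
          rw [hB]; simp only [Sum.elim_inl]; rw [hstar' b (e j) (e l)]
      have hc1 : Summable fun l : ι => F (j, l) := hFsum.prod_factor j
      have hc2 : Summable fun l : ι => F (l, j) := hFswap.prod_factor j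
      have t1 : ∀ l : ι, (p j : ℂ) * (⟪a (e j), e l⟫_ℂ * ⟪e l, b (e j)⟫_ℂ) = -F (l, j) := by
        intro l
        have hconj : ⟪a (e j), e l⟫_ℂ = star ⟪e l, a (e j)⟫_ℂ := by
          rw [← inner_conj_symm (e l) (a (e j)), starRingEnd_apply, star_star]
        calc (p j : ℂ) * (⟪a (e j), e l⟫_ℂ * ⟪e l, b (e j)⟫_ℂ)
            = ((p j : ℂ) * star ⟪e l, a (e j)⟫_ℂ) * ⟪e l, b (e j)⟫_ℂ := by
              rw [hconj]; ring
          _ = -((p l : ℂ) * ⟪e j, a (e l)⟫_ℂ) * ⟪e l, b (e j)⟫_ℂ := by rw [h2' j l]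
          _ = -F (l, j) := by simp only [hFdef]; ring
      have t2 : ∀ l : ι, (p j : ℂ) * (⟪e j, b (e l)⟫_ℂ * ⟪e l, a (e j)⟫_ℂ) = F (j, l) := by
        intro l; simp only [hFdef]; ring
      calc (p j : ℂ) * ⟪e j, (star a * b + b * a) (e j)⟫_ℂ
          = (p j : ℂ) * (⟪a (e j), b (e j)⟫_ℂ + ⟪e j, b (a (e j))⟫_ℂ) := by
            rw [ContinuousLinearMap.add_apply, ContinuousLinearMap.mul_apply,
              ContinuousLinearMap.mul_apply, inner_add_right, hstar]
        _ = (∑' l : ι, (p j : ℂ) * (⟪a (e j), e l⟫_ℂ * ⟪e l, b (e j)⟫_ℂ))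
            + ∑' l : ι, (p j : ℂ) * (⟪e j, b (e l)⟫_ℂ * ⟪e l, a (e j)⟫_ℂ) := by
            rw [← e1, ← e2, mul_add, tsum_mul_left, tsum_mul_left]
        _ = (∑' l : ι, -F (l, j)) + ∑' l : ι, F (j, l) := by
            rw [tsum_congr t1, tsum_congr t2]
        _ = (∑' l : ι, F (j, l)) - ∑' l : ι, F (l, j) := by
            rw [tsum_neg]; ring
        _ = ∑' l : ι, (F (j, l) - F (l, j)) := (Summable.tsum_sub hc1 hc2).symm
    rw [tsum_congr key]
    have hprod := Summable.tsum_prod' (hFsum.sub hFswap)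
      (fun j => (hFsum.prod_factor j).sub (hFswap.prod_factor j))
    have hzero : ∑' q : ι × ι, (F q - F q.swap) = 0 := by
      rw [Summable.tsum_sub hFsum hFswap, sub_eq_zero]
      exact ((Equiv.prodComm ι ι).tsum_eq F).symm
    exact hprod.symm.trans hzero
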